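/- arXiv:2605.05370 — 3 statements merged into one kernel-verified Lean document; each statement's English description precedes it below -/
import Mathlib

section
/- Let V be a real-valued random variable distributed as a Gaussian N(μ, τ²) with τ > 0. Then the expectation of max(0, V) equals μ·Φ(μ/τ) + τ·φ(μ/τ), where Φ and φ denote the cumulative distribution function and probability density function of the standard Gaussian N(0,1), respectively. Equivalently, ∫ max(0, v) d(gaussianReal μ τ²)(v) = μ·Φ(μ/τ) + τ·φ(μ/τ). -/
open MeasureTheory ProbabilityTheory Real Set Filter
open scoped NNReal ENNReal

/-- The cdf `Φ` of the standard Gaussian `N(0,1)`. -/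
noncomputable def stdGaussianCDF (t : ℝ) : ℝ :=
  ((gaussianReal 0 1) (Set.Iic t)).toReal

/-- The pdf `φ` of the standard Gaussian `N(0,1)`. -/
noncomputable def stdGaussianPDF (t : ℝ) : ℝ :=
  (1 / Real.sqrt (2 * Real.pi)) * Real.exp (-t ^ 2 / 2)

lemma pdf_eq (x : ℝ) : gaussianPDFReal 0 1 x = stdGaussianPDF x := by
  simp only [gaussianPDFReal, stdGaussianPDF, NNReal.coe_one, mul_one, sub_zero, one_div]

lemma pdf_eq' : gaussianPDFReal 0 1 = stdGaussianPDF := funext pdf_eq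

lemma pdf_nonneg (x : ℝ) : 0 ≤ stdGaussianPDF x := by
  rw [← pdf_eq]; exact gaussianPDFReal_nonneg _ _ _

lemma pdf_even (x : ℝ) : stdGaussianPDF (-x) = stdGaussianPDF x := by
  simp [stdGaussianPDF]

lemma measurable_pdf : Measurable stdGaussianPDF :=
  pdf_eq' ▸ measurable_gaussianPDFReal 0 1

lemma integrable_pdf : Integrable (fun x => stdGaussianPDF x) :=
  pdf_eq' ▸ integrable_gaussianPDFReal 0 1

lemma integrable_xpdf : Integrable (fun x => x * stdGaussianPDF x) := by
  have h := (integrable_mul_exp_neg_mul_sq (by norm_num : (0:ℝ) < 1/2)).const_mul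
    (1 / Real.sqrt (2 * Real.pi))
  refine h.congr (Filter.Eventually.of_forall fun x => ?_)
  simp only [stdGaussianPDF]
  rw [show -(1/2 : ℝ) * x ^ 2 = -x ^ 2 / 2 by ring]
  ring

lemma hasDeriv_negpdf (x : ℝ) :
    HasDerivAt (fun y => -stdGaussianPDF y) (x * stdGaussianPDF x) x := by
  have h1 : HasDerivAt (fun y : ℝ => -y ^ 2 / 2) (-x) x := by
    have := ((hasDerivAt_pow 2 x).neg).div_const 2
    exact this.congr_deriv (by push_cast; ring)
  have h2 := (h1.exp.const_mul (1 / Real.sqrt (2 * Real.pi))).neg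
  have hval : x * stdGaussianPDF x
      = -(1 / Real.sqrt (2 * Real.pi) * (Real.exp (-x ^ 2 / 2) * -x)) := by
    simp only [stdGaussianPDF]; ring
  rw [hval]
  exact h2

lemma tendsto_pdf_atTop : Tendsto (fun x => -stdGaussianPDF x) atTop (nhds 0) := by
  have h1 : Tendsto (fun x : ℝ => -x ^ 2 / 2) atTop atBot := by
    apply Tendsto.atBot_div_const (by norm_num : (0:ℝ) < 2)
    exact tendsto_neg_atBot_iff.mpr (tendsto_pow_atTop two_ne_zero)
  have h2 := (Real.tendsto_exp_atBot.comp h1).const_mul (1 / Real.sqrt (2 * Real.pi))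
  simpa [stdGaussianPDF, Function.comp, neg_zero, mul_zero] using h2.neg

lemma integral_xpdf_Ioi (a : ℝ) : ∫ x in Ioi a, x * stdGaussianPDF x = stdGaussianPDF a := by
  have := integral_Ioi_of_hasDerivAt_of_tendsto' (a := a)
    (fun x _ => hasDeriv_negpdf x) integrable_xpdf.integrableOn tendsto_pdf_atTop
  simpa using this

lemma integral_pdf_Iic (t : ℝ) : ∫ x in Iic t, stdGaussianPDF x = stdGaussianCDF t := by
  rw [stdGaussianCDF, gaussianReal_apply_eq_integral 0 one_ne_zero,
    ENNReal.toReal_ofReal (integral_nonneg (gaussianPDFReal_nonneg 0 1))]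
  simp_rw [pdf_eq]

lemma integral_pdf_Ioi (c : ℝ) : ∫ x in Ioi (-c), stdGaussianPDF x = stdGaussianCDF c := by
  have h : ∫ x in Ioi (-c), stdGaussianPDF x = ∫ x in Ioi (-c), stdGaussianPDF (-x) := by
    simp_rw [pdf_even]
  rw [h, integral_comp_neg_Ioi, neg_neg, integral_pdf_Iic]

theorem expectation_max_zero_gaussian (μ τ : ℝ) (hτ : 0 < τ) :
    ∫ v, max 0 v ∂(gaussianReal μ (Real.toNNReal (τ ^ 2))) =
      μ * stdGaussianCDF (μ / τ) + τ * stdGaussianPDF (μ / τ) := by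
  have hτ0 : τ ≠ 0 := hτ.ne'
  -- step 1: express as map of standard gaussian
  have hv : (⟨τ ^ 2, sq_nonneg τ⟩ : ℝ≥0) * 1 = Real.toNNReal (τ ^ 2) := by
    rw [mul_one]
    exact (Real.toNNReal_of_nonneg (sq_nonneg τ)).symm
  have hmap : gaussianReal μ (Real.toNNReal (τ ^ 2)) =
      (gaussianReal 0 1).map (fun x => τ * x + μ) := by
    have hc : (fun x : ℝ => τ * x + μ) = (· + μ) ∘ (fun x => τ * x) := rfl
    rw [hc, ← Measure.map_map (by fun_prop) (by fun_prop),
      gaussianReal_map_const_mul, gaussianReal_map_add_const, ← hv]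
    norm_num
    rfl
  rw [hmap, integral_map (by fun_prop) (measurable_const.max measurable_id').aestronglyMeasurable]
  -- step 2: withDensity
  rw [gaussianReal_of_var_ne_zero _ one_ne_zero]
  have hpdf : gaussianPDF 0 1 = fun x => ((stdGaussianPDF x).toNNReal : ℝ≥0∞) := by
    funext x; rw [gaussianPDF, pdf_eq]; rfl
  rw [hpdf, integral_withDensity_eq_integral_smul measurable_pdf.real_toNNReal _]
  simp_rw [NNReal.smul_def, Real.coe_toNNReal _ (pdf_nonneg _), smul_eq_mul]
  -- the real integral
  set a : ℝ := -(μ / τ) with ha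
  have haa : τ * a + μ = 0 := by rw [ha]; field_simp; ring
  have key : ∀ x : ℝ, stdGaussianPDF x * max 0 (τ * x + μ)
      = max (τ * (x * stdGaussianPDF x) + μ * stdGaussianPDF x) 0 := by
    intro x
    rcases le_or_gt (τ * x + μ) 0 with h | h
    · rw [max_eq_left h, mul_zero, max_eq_right]
      nlinarith [pdf_nonneg x]
    · rw [max_eq_right h.le, max_eq_left]
      · ring
      · nlinarith [pdf_nonneg x]
  simp_rw [key]
  have hint : Integrable (fun x => τ * (x * stdGaussianPDF x) + μ * stdGaussianPDF x) :=
    (integrable_xpdf.const_mul τ).add (integrable_pdf.const_mul μ)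
  have hintmax : Integrable
      (fun x => max (τ * (x * stdGaussianPDF x) + μ * stdGaussianPDF x) 0) := hint.pos_part
  rw [← intervalIntegral.integral_Iic_add_Ioi (b := a) hintmax.integrableOn hintmax.integrableOn]
  have hIic : ∫ x in Iic a, max (τ * (x * stdGaussianPDF x) + μ * stdGaussianPDF x) 0 = 0 := by
    rw [setIntegral_congr_fun measurableSet_Iic (g := fun _ => (0:ℝ)) ?_, integral_zero]
    intro x hx
    dsimp only
    rw [← key x, max_eq_left, mul_zero]
    have hle : τ * x + μ ≤ τ * a + μ := by
      have := mul_le_mul_of_nonneg_left (hx : x ≤ a) hτ.le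
      linarith
    linarith
  have hIoi : ∫ x in Ioi a, max (τ * (x * stdGaussianPDF x) + μ * stdGaussianPDF x) 0
      = τ * stdGaussianPDF a + μ * stdGaussianCDF (μ / τ) := by
    rw [setIntegral_congr_fun measurableSet_Ioi
        (g := fun x => τ * (x * stdGaussianPDF x) + μ * stdGaussianPDF x) ?_]
    · rw [integral_add ((integrable_xpdf.const_mul τ).integrableOn)
        ((integrable_pdf.const_mul μ).integrableOn),
        integral_const_mul, integral_const_mul, integral_xpdf_Ioi, ha, integral_pdf_Ioi]
    · intro x hx
      dsimp only
      rw [max_eq_left]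
      have hlt : τ * a + μ < τ * x + μ := by
        have := mul_lt_mul_of_pos_left (hx : a < x) hτ
        linarith
      nlinarith [pdf_nonneg x]
  rw [hIic, hIoi, ha, pdf_even]
  ring
end

section
/- (Theorem 1 of the paper.) Let d be a positive natural number, x_i ∈ ℝ^d, σ > 0, c ∈ ℝ, and w ∈ ℝ^d with ‖w‖ > 0. Define the classifier score C(x) := c + ⟨w, x⟩, the hinge loss on the positive class ℓ(C(x), 1) := max(0, 1 − C(x)), and s_i := 1 − (c + ⟨w, x_i⟩). Then the expected loss over x drawn from the isotropic Gaussian N(x_i, σ²I) on ℝ^d satisfies E_{x∼N(x_i, σ²I)}[max(0, 1 − (c + ⟨w, x⟩))] = s_i·Φ(s_i/(σ‖w‖)) + σ‖w‖·φ(s_i/(σ‖w‖)), where Φ and φ are the cdf and pdf of the standard Gaussian N(0,1). -/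
open MeasureTheory ProbabilityTheory Real

open scoped ENNReal NNReal

lemma pdfconv (μ₁ μ₂ : ℝ) (v₁ v₂ : ℝ≥0) (h₁ : v₁ ≠ 0) (h₂ : v₂ ≠ 0) (t : ℝ) :
    ∫ x, gaussianPDFReal μ₁ v₁ x * gaussianPDFReal μ₂ v₂ (t - x)
      = gaussianPDFReal (μ₁ + μ₂) (v₁ + v₂) t := by
  have ha : (0:ℝ) < v₁ := lt_of_le_of_ne v₁.2 (by exact_mod_cast Ne.symm h₁)
  have hb : (0:ℝ) < v₂ := lt_of_le_of_ne v₂.2 (by exact_mod_cast Ne.symm h₂)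
  set a : ℝ := (v₁ : ℝ) with hav
  set b : ℝ := (v₂ : ℝ) with hbv
  set β : ℝ := (a + b) / (2 * a * b) with hβ
  have hβpos : 0 < β := by positivity
  set xs : ℝ := (μ₁ * b + (t - μ₂) * a) / (a + b) with hxs
  set C : ℝ := (t - μ₁ - μ₂)^2 / (2 * (a + b)) with hC
  have key : ∀ x : ℝ, gaussianPDFReal μ₁ v₁ x * gaussianPDFReal μ₂ v₂ (t - x)
      = ((√(2 * π * a))⁻¹ * (√(2 * π * b))⁻¹ * rexp (-C)) * rexp (-β * (x - xs)^2) := by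
    intro x
    have hE : -(x - μ₁)^2/(2*a) + -(t - x - μ₂)^2/(2*b) = -C + -β*(x-xs)^2 := by
      rw [hβ, hxs, hC]; field_simp; ring
    rw [gaussianPDFReal, gaussianPDFReal, mul_mul_mul_comm, ← Real.exp_add, hE, Real.exp_add]
    ring
  simp only [key]
  rw [integral_const_mul, integral_sub_right_eq_self (fun x => rexp (-β * x^2)) xs,
    integral_gaussian]
  have h1 : √(π / β) = √(2 * π * (a*b)/(a+b)) := by
    congr 1
    rw [hβ]
    field_simp
  rw [h1, gaussianPDFReal]
  push_cast
  have h3 : -(t - (μ₁+μ₂))^2/(2*(a+b)) = -C := by rw [hC]; ring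
  rw [h3]
  have h2 : (√(2 * π * a))⁻¹ * (√(2 * π * b))⁻¹ * √(2 * π * (a*b)/(a+b))
      = (√(2 * π * (a + b)))⁻¹ := by
    rw [← Real.sqrt_inv, ← Real.sqrt_inv, ← Real.sqrt_mul (by positivity),
      ← Real.sqrt_mul (by positivity)]
    congr 1
    field_simp
    rw [← Real.sqrt_mul (by positivity), one_div,
      inv_mul_cancel₀ (mul_pos (mul_pos two_pos pi_pos) (add_pos ha hb)).ne', Real.sqrt_one]
  linear_combination rexp (-C) * h2

lemma gaussianPDFReal_le (μ : ℝ) (v : ℝ≥0) (x : ℝ) :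
    gaussianPDFReal μ v x ≤ (√(2 * π * v))⁻¹ := by
  rw [gaussianPDFReal]
  have hexp : rexp (-(x - μ)^2 / (2 * (v:ℝ))) ≤ 1 := by
    rw [Real.exp_le_one_iff]
    apply div_nonpos_of_nonpos_of_nonneg (neg_nonpos.mpr (sq_nonneg _)) (by positivity)
  calc (√(2 * π * v))⁻¹ * rexp (-(x - μ)^2 / (2 * (v:ℝ)))
      ≤ (√(2 * π * v))⁻¹ * 1 := by gcongr
    _ = (√(2 * π * v))⁻¹ := mul_one _

lemma gaussconv (μ₁ μ₂ : ℝ) (v₁ v₂ : ℝ≥0) :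
    Measure.map (fun p : ℝ × ℝ => p.1 + p.2)
        ((gaussianReal μ₁ v₁).prod (gaussianReal μ₂ v₂))
      = gaussianReal (μ₁ + μ₂) (v₁ + v₂) := by
  by_cases h₁ : v₁ = 0
  · subst h₁
    rw [gaussianReal_zero_var, Measure.dirac_prod, zero_add,
      Measure.map_map measurable_add (measurable_prodMk_left)]
    have : ((fun p : ℝ × ℝ => p.1 + p.2) ∘ Prod.mk μ₁) = fun y => μ₁ + y := rfl
    rw [this, gaussianReal_map_const_add, add_comm μ₂ μ₁]
  by_cases h₂ : v₂ = 0
  · subst h₂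
    rw [gaussianReal_zero_var, Measure.prod_dirac, add_zero,
      Measure.map_map measurable_add (measurable_prodMk_right)]
    have : ((fun p : ℝ × ℝ => p.1 + p.2) ∘ (fun x => (x, μ₂))) = fun x => x + μ₂ := rfl
    rw [this, gaussianReal_map_add_const]
  -- main case
  have h₁₂ : v₁ + v₂ ≠ 0 := by simp [h₁]
  ext s hs
  rw [Measure.map_apply measurable_add hs, Measure.prod_apply (measurable_add hs)]
  have hsec : ∀ x : ℝ, (gaussianReal μ₂ v₂) (Prod.mk x ⁻¹' ((fun p : ℝ × ℝ => p.1 + p.2) ⁻¹' s))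
      = ∫⁻ y in s, ENNReal.ofReal (gaussianPDFReal μ₂ v₂ (y - x)) := by
    intro x
    have hpre : Prod.mk x ⁻¹' ((fun p : ℝ × ℝ => p.1 + p.2) ⁻¹' s) = (fun y => x + y) ⁻¹' s := rfl
    rw [hpre, ← Measure.map_apply (measurable_const_add x) hs, gaussianReal_map_const_add,
      gaussianReal_apply _ h₂ s]
    congr 1 with y
    rw [gaussianPDF, gaussianPDFReal_sub]
  simp_rw [hsec]
  have hmeas2 : Measurable (fun q : ℝ × ℝ => ENNReal.ofReal (gaussianPDFReal μ₂ v₂ (q.2 - q.1))) :=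
    ((measurable_gaussianPDFReal μ₂ v₂).comp (by fun_prop)).ennreal_ofReal
  have hmeasF : Measurable (fun x : ℝ => ∫⁻ y in s, ENNReal.ofReal (gaussianPDFReal μ₂ v₂ (y - x))) := by
    apply Measurable.lintegral_prod_right (f := fun x y => ENNReal.ofReal (gaussianPDFReal μ₂ v₂ (y - x)))
    exact hmeas2
  rw [gaussianReal_of_var_ne_zero _ h₁,
    lintegral_withDensity_eq_lintegral_mul _ (measurable_gaussianPDF _ _) hmeasF]
  have hswap : ∫⁻ x, (gaussianPDF μ₁ v₁ * fun x => ∫⁻ y in s, ENNReal.ofReal (gaussianPDFReal μ₂ v₂ (y - x))) x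
      = ∫⁻ y in s, ∫⁻ x, gaussianPDF μ₁ v₁ x * ENNReal.ofReal (gaussianPDFReal μ₂ v₂ (y - x)) := by
    simp only [Pi.mul_apply]
    rw [← lintegral_lintegral_swap]
    · congr 1 with x
      have hmy : Measurable fun y : ℝ => ENNReal.ofReal (gaussianPDFReal μ₂ v₂ (y - x)) :=
        Measurable.ennreal_ofReal ((measurable_gaussianPDFReal μ₂ v₂).comp
          (measurable_id.sub_const x))
      exact (lintegral_const_mul _ hmy).symm
    · have : Measurable (Function.uncurry fun x y : ℝ =>
          gaussianPDF μ₁ v₁ x * ENNReal.ofReal (gaussianPDFReal μ₂ v₂ (y - x))) := by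
        exact ((measurable_gaussianPDF μ₁ v₁).comp measurable_fst).mul
          hmeas2
      exact this.aemeasurable
  rw [hswap]
  have hinner : ∀ y : ℝ, ∫⁻ x, gaussianPDF μ₁ v₁ x * ENNReal.ofReal (gaussianPDFReal μ₂ v₂ (y - x))
      = gaussianPDF (μ₁ + μ₂) (v₁ + v₂) y := by
    intro y
    have hnn : 0 ≤ᵐ[volume] fun x => gaussianPDFReal μ₁ v₁ x * gaussianPDFReal μ₂ v₂ (y - x) :=
      ae_of_all _ fun x => mul_nonneg (gaussianPDFReal_nonneg _ _ _) (gaussianPDFReal_nonneg _ _ _)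
    have hint : Integrable (fun x => gaussianPDFReal μ₂ v₂ (y - x) * gaussianPDFReal μ₁ v₁ x) := by
      apply (integrable_gaussianPDFReal μ₁ v₁).bdd_mul (c := (√(2 * π * v₂))⁻¹)
      · exact ((measurable_gaussianPDFReal μ₂ v₂).comp
          (measurable_const.sub measurable_id)).aestronglyMeasurable
      · exact ae_of_all _ fun x => by
          rw [Real.norm_eq_abs, abs_of_nonneg (gaussianPDFReal_nonneg _ _ _)]
          exact gaussianPDFReal_le _ _ _
    have hint' : Integrable (fun x => gaussianPDFReal μ₁ v₁ x * gaussianPDFReal μ₂ v₂ (y - x)) := by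
      simpa [mul_comm] using hint
    calc ∫⁻ x, gaussianPDF μ₁ v₁ x * ENNReal.ofReal (gaussianPDFReal μ₂ v₂ (y - x))
        = ∫⁻ x, ENNReal.ofReal (gaussianPDFReal μ₁ v₁ x * gaussianPDFReal μ₂ v₂ (y - x)) := by
          congr 1 with x
          rw [gaussianPDF, ← ENNReal.ofReal_mul (gaussianPDFReal_nonneg _ _ _)]
      _ = ENNReal.ofReal (∫ x, gaussianPDFReal μ₁ v₁ x * gaussianPDFReal μ₂ v₂ (y - x)) :=
          (ofReal_integral_eq_lintegral_ofReal hint' hnn).symm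
      _ = gaussianPDF (μ₁ + μ₂) (v₁ + v₂) y := by
          rw [pdfconv μ₁ μ₂ v₁ v₂ h₁ h₂ y, gaussianPDF]
  simp_rw [hinner]
  rw [gaussianReal_apply _ h₁₂ s]

noncomputable def sqNN (w : ℝ) : ℝ≥0 := ⟨w^2, sq_nonneg w⟩

lemma mapsum (n : ℕ) (μ : Fin n → ℝ) (v : Fin n → ℝ≥0) (w : Fin n → ℝ) :
    Measure.map (fun x : Fin n → ℝ => ∑ j, w j * x j)
        (Measure.pi fun j => gaussianReal (μ j) (v j))
      = gaussianReal (∑ j, w j * μ j) (∑ j, sqNN (w j) * v j) := by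
  induction n with
  | zero =>
      simp only [Finset.univ_eq_empty, Finset.sum_empty]
      rw [show (fun x : Fin 0 → ℝ => (0:ℝ)) = fun _ => (0:ℝ) from rfl, Measure.map_const,
        measure_univ, one_smul, gaussianReal_zero_var]
  | succ n ih =>
      set ν : Fin (n+1) → Measure ℝ := fun j => gaussianReal (μ j) (v j) with hν
      have MP := measurePreserving_piFinSuccAbove ν 0
      set e := MeasurableEquiv.piFinSuccAbove (fun _ : Fin (n+1) => ℝ) 0 with he
      have hg : Measurable (fun p : ℝ × (Fin n → ℝ) => w 0 * p.1 + ∑ j, w j.succ * p.2 j) := by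
        fun_prop
      have hcomp : (fun x : Fin (n+1) → ℝ => ∑ j, w j * x j)
          = (fun p : ℝ × (Fin n → ℝ) => w 0 * p.1 + ∑ j, w j.succ * p.2 j) ∘ e := by
        funext x
        simp [e, MeasurableEquiv.piFinSuccAbove, Fin.sum_univ_succ, Fin.succAbove_zero, Fin.tail]
      rw [hcomp, ← Measure.map_map hg e.measurable, MP.map_eq]
      have htail : (fun j : Fin n => ν ((0:Fin (n+1)).succAbove j))
          = fun j : Fin n => gaussianReal (μ j.succ) (v j.succ) := by
        funext j; rw [hν]; simp [Fin.succAbove_zero]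
      rw [htail]
      have hsplit : (fun p : ℝ × (Fin n → ℝ) => w 0 * p.1 + ∑ j, w j.succ * p.2 j)
          = (fun q : ℝ × ℝ => q.1 + q.2) ∘
            Prod.map (fun y : ℝ => w 0 * y) (fun z : Fin n → ℝ => ∑ j, w j.succ * z j) := rfl
      rw [hν, hsplit, ← Measure.map_map measurable_add (by fun_prop),
        ← Measure.map_prod_map _ _ (by fun_prop) (by fun_prop),
        gaussianReal_map_const_mul (w 0),
        ih (fun j => μ j.succ) (fun j => v j.succ) (fun j => w j.succ),
        gaussconv, Fin.sum_univ_succ, Fin.sum_univ_succ]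
      rfl

lemma stdpdf_eq (t : ℝ) : gaussianPDFReal 0 1 t = stdGaussianPDF t := by
  rw [gaussianPDFReal, stdGaussianPDF]
  norm_num

lemma std_integrable : Integrable (gaussianPDFReal 0 1) := integrable_gaussianPDFReal 0 1

lemma std_id_integrable : Integrable (fun z : ℝ => z * gaussianPDFReal 0 1 z) := by
  simp_rw [gaussianPDFReal]
  have h : Integrable (fun z : ℝ => z * rexp (-(2⁻¹ : ℝ) * z^2)) :=
    integrable_mul_exp_neg_mul_sq (by norm_num)
  apply Integrable.congr (h.const_mul (√(2 * π * (1:ℝ≥0)))⁻¹)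
  filter_upwards with z
  push_cast
  rw [mul_one]
  ring_nf

lemma std_cdf_eq (a : ℝ) : stdGaussianCDF a = ∫ z in Set.Iic a, gaussianPDFReal 0 1 z := by
  rw [stdGaussianCDF, gaussianReal_apply_eq_integral 0 one_ne_zero,
    ENNReal.toReal_ofReal (integral_nonneg fun z => gaussianPDFReal_nonneg _ _ _)]

lemma int_Iic_id_pdf (a : ℝ) :
    ∫ z in Set.Iic a, z * gaussianPDFReal 0 1 z = -gaussianPDFReal 0 1 a := by
  have hderiv : ∀ z ∈ Set.Iic a, HasDerivAt (fun z => -gaussianPDFReal 0 1 z)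
      (z * gaussianPDFReal 0 1 z) z := by
    intro z _
    simp_rw [gaussianPDFReal]
    push_cast
    have h1 : HasDerivAt (fun z : ℝ => -(z - 0)^2 / (2*1)) (-z) z := by
      have h : HasDerivAt (fun u : ℝ => u - 0) 1 z := (hasDerivAt_id z).sub_const 0
      have h2 : HasDerivAt (fun u : ℝ => (u - 0)^2) (2 * (z - 0)) z := by
        simpa using hasDerivAt_pow 2 z
      have h3 := (h2.neg).div_const (2*1)
      exact h3.congr_deriv (by ring)
    have h3 := ((h1.exp).const_mul (√(2 * π * 1))⁻¹).neg
    exact h3.congr_deriv (by ring)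
  have h1 : Filter.Tendsto (fun z : ℝ => z^2) Filter.atBot Filter.atTop := by
    have habs : Filter.Tendsto (fun z : ℝ => |z|) Filter.atBot Filter.atTop :=
      Filter.tendsto_abs_atBot_atTop
    have hpow : Filter.Tendsto (fun y : ℝ => y^2) Filter.atTop Filter.atTop :=
      Filter.tendsto_pow_atTop (by norm_num)
    simpa [Function.comp_def, sq_abs] using hpow.comp habs
  have h2 : Filter.Tendsto (fun z : ℝ => -(z - 0)^2 / (2*((1:ℝ≥0):ℝ))) Filter.atBot
      Filter.atBot := by
    push_cast
    simp_rw [sub_zero, neg_div]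
    exact (Filter.tendsto_neg_atTop_atBot).comp (h1.atTop_div_const (by norm_num))
  have htend : Filter.Tendsto (fun z => gaussianPDFReal 0 1 z) Filter.atBot (nhds 0) := by
    have h4 := (Real.tendsto_exp_atBot.comp h2).const_mul ((√(2 * π * ((1:ℝ≥0):ℝ)))⁻¹)
    rw [mul_zero] at h4
    apply h4.congr
    intro z
    rw [gaussianPDFReal]
    rfl
  have hlim : Filter.Tendsto (fun z => -gaussianPDFReal 0 1 z) Filter.atBot (nhds 0) := by
    simpa using htend.neg
  rw [integral_Iic_of_hasDerivAt_of_tendsto' hderiv std_id_integrable.integrableOn hlim, sub_zero]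

lemma oned (τ s' : ℝ) (hτ : 0 < τ) :
    ∫ z, gaussianPDFReal 0 1 z * max 0 (s' - τ * z)
      = s' * stdGaussianCDF (s'/τ) + τ * stdGaussianPDF (s'/τ) := by
  set a := s'/τ with ha
  have hint2 : Integrable (fun z => s' * gaussianPDFReal 0 1 z - τ * (z * gaussianPDFReal 0 1 z)) :=
    ((integrable_gaussianPDFReal 0 1).const_mul s').sub (std_id_integrable.const_mul τ)
  have heq : ∀ z : ℝ, gaussianPDFReal 0 1 z * max 0 (s' - τ * z)
      = max (gaussianPDFReal 0 1 z * (s' - τ * z)) 0 := by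
    intro z
    rw [mul_max_of_nonneg _ _ (gaussianPDFReal_nonneg 0 1 z), mul_zero, max_comm]
  have hint : Integrable (fun z => gaussianPDFReal 0 1 z * max 0 (s' - τ * z)) := by
    apply Integrable.congr _ (ae_of_all _ fun z => (heq z).symm)
    apply Integrable.pos_part
    apply hint2.congr
    filter_upwards with z
    ring
  rw [← integral_add_compl (measurableSet_Iic (a := a)) hint, Set.compl_Iic]
  have hIoi : ∫ z in Set.Ioi a, gaussianPDFReal 0 1 z * max 0 (s' - τ * z) = 0 := by
    rw [setIntegral_congr_fun measurableSet_Ioi (g := fun _ => (0:ℝ)), integral_zero]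
    intro z hz
    have : s' - τ * z < 0 := by
      rw [Set.mem_Ioi, ha, div_lt_iff₀ hτ] at hz
      nlinarith
    simp [max_eq_left this.le]
  have hIic : ∫ z in Set.Iic a, gaussianPDFReal 0 1 z * max 0 (s' - τ * z)
      = s' * stdGaussianCDF a + τ * stdGaussianPDF a := by
    rw [setIntegral_congr_fun measurableSet_Iic
      (g := fun z => s' * gaussianPDFReal 0 1 z - τ * (z * gaussianPDFReal 0 1 z))]
    · rw [integral_sub (((integrable_gaussianPDFReal 0 1).const_mul s').integrableOn)
        ((std_id_integrable.const_mul τ).integrableOn), integral_const_mul, integral_const_mul,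
        int_Iic_id_pdf, ← std_cdf_eq, stdpdf_eq]
      ring
    · intro z hz
      rw [Set.mem_Iic, ha, le_div_iff₀ hτ] at hz
      have : 0 ≤ s' - τ * z := by nlinarith
      dsimp only
      rw [max_eq_right this]
      ring
  rw [hIoi, hIic, add_zero]

lemma oned' (m τ : ℝ) (hτ : 0 < τ) (c : ℝ) :
    ∫ y, max 0 (1 - (c + y)) ∂gaussianReal m ((τ^2).toNNReal)
      = (1 - (c + m)) * stdGaussianCDF ((1 - (c + m))/τ)
        + τ * stdGaussianPDF ((1 - (c + m))/τ) := by
  have hmap : gaussianReal m ((τ^2).toNNReal)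
      = Measure.map (fun z => τ * z + m) (gaussianReal 0 1) := by
    have h1 := gaussianReal_map_const_mul (μ := 0) (v := 1) τ
    have h2 : (fun z : ℝ => τ * z + m) = (fun y => y + m) ∘ (fun z => τ * z) := rfl
    rw [h2, ← Measure.map_map (by fun_prop) (by fun_prop)]
    rw [show ((fun z : ℝ => τ * z)) = (τ * ·) from rfl, h1, gaussianReal_map_add_const,
      mul_zero, zero_add]
    congr 1
    ext
    simp [Real.coe_toNNReal _ (sq_nonneg τ)]
  have hf : AEStronglyMeasurable (fun y : ℝ => max 0 (1 - (c + y)))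
      (Measure.map (fun z => τ * z + m) (gaussianReal 0 1)) :=
    Continuous.aestronglyMeasurable (continuous_const.max
      (continuous_const.sub (continuous_const.add continuous_id)))
  rw [hmap, integral_map (by fun_prop) hf]
  have hbeta : ∀ z : ℝ, max 0 (1 - (c + (τ * z + m))) = max 0 ((1 - (c + m)) - τ * z) := by
    intro z; ring_nf
  simp_rw [hbeta]
  have hwd : gaussianReal 0 1
      = volume.withDensity (fun x => ((gaussianPDFReal 0 1 x).toNNReal : ℝ≥0∞)) := by
    rw [gaussianReal_of_var_ne_zero 0 one_ne_zero]
    rfl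
  rw [hwd, integral_withDensity_eq_integral_smul
    ((measurable_gaussianPDFReal 0 1).real_toNNReal)]
  have : ∀ z : ℝ, (gaussianPDFReal 0 1 z).toNNReal • max 0 ((1 - (c + m)) - τ * z)
      = gaussianPDFReal 0 1 z * max 0 ((1 - (c + m)) - τ * z) := by
    intro z
    rw [NNReal.smul_def, Real.coe_toNNReal _ (gaussianPDFReal_nonneg 0 1 z), smul_eq_mul]
  simp_rw [this]
  exact oned τ (1 - (c + m)) hτ


/-- Theorem 1 of the paper: closed form for the expected positive-class hinge loss
under the isotropic Gaussian `N(x_i, σ²I)`. -/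
theorem expected_hinge_loss_closed_form
    (d : ℕ) (hd : 0 < d) (xi : Fin d → ℝ) (σ : ℝ) (hσ : 0 < σ)
    (c : ℝ) (w : Fin d → ℝ)
    (hw : 0 < Real.sqrt (∑ j, (w j) ^ 2)) :
    (∫ x, max 0 (1 - (c + ∑ j, w j * x j))
        ∂(Measure.pi fun j => gaussianReal (xi j) (Real.toNNReal (σ ^ 2)))) =
      (1 - (c + ∑ j, w j * xi j)) *
          stdGaussianCDF ((1 - (c + ∑ j, w j * xi j)) / (σ * Real.sqrt (∑ j, (w j) ^ 2))) +
        σ * Real.sqrt (∑ j, (w j) ^ 2) *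
          stdGaussianPDF ((1 - (c + ∑ j, w j * xi j)) / (σ * Real.sqrt (∑ j, (w j) ^ 2))) := by
  set S : ℝ := ∑ j, (w j)^2 with hS
  set τ : ℝ := σ * Real.sqrt S with hτdef
  have hτ : 0 < τ := mul_pos hσ hw
  set m : ℝ := ∑ j, w j * xi j with hm
  have hmeasz : Measurable (fun x : Fin d → ℝ => ∑ j, w j * x j) := by fun_prop
  have hf : AEStronglyMeasurable (fun y : ℝ => max 0 (1 - (c + y)))
      (Measure.map (fun x : Fin d → ℝ => ∑ j, w j * x j)
        (Measure.pi fun j => gaussianReal (xi j) (Real.toNNReal (σ ^ 2)))) :=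
    Continuous.aestronglyMeasurable (continuous_const.max
      (continuous_const.sub (continuous_const.add continuous_id)))
  have h1 := integral_map (f := fun y : ℝ => max 0 (1 - (c + y)))
    hmeasz.aemeasurable hf
  rw [← h1, mapsum d xi (fun _ => Real.toNNReal (σ ^ 2)) w]
  have hV : (∑ j, sqNN (w j) * Real.toNNReal (σ ^ 2)) = (τ^2).toNNReal := by
    ext
    push_cast [NNReal.coe_sum]
    rw [Real.coe_toNNReal _ (sq_nonneg τ)]
    have : ∀ j, (sqNN (w j) : ℝ) * (Real.toNNReal (σ ^ 2) : ℝ) = (w j)^2 * σ^2 := by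
      intro j
      rw [Real.coe_toNNReal _ (sq_nonneg σ)]
      rfl
    rw [Finset.sum_congr rfl fun j _ => this j, hτdef, mul_pow, Real.sq_sqrt]
    · rw [← Finset.sum_mul]
      ring
    · exact Finset.sum_nonneg fun j _ => sq_nonneg _
  rw [hV, oned' m τ hτ c]
end

section
/- The function g : ℝ × ℝ → ℝ defined for r > 0 by g(s, r) := s·Φ(s/r) + r·φ(s/r) is convex on the set ℝ × (0, ∞), where Φ and φ are the cdf and pdf of the standard Gaussian N(0,1). (Equivalently, g(s, r) = E_{Z∼N(0,1)}[max(0, s + r·Z)], an expectation of a function that is jointly convex in (s, r) for every fixed Z.) -/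
open MeasureTheory ProbabilityTheory Real

lemma stdGaussianPDF_eq (t : ℝ) : stdGaussianPDF t = gaussianPDFReal 0 1 t := by
  simp [stdGaussianPDF, gaussianPDFReal]

lemma stdGaussianCDF_eq (t : ℝ) :
    stdGaussianCDF t = ∫ x in Set.Iic t, gaussianPDFReal 0 1 x := by
  rw [stdGaussianCDF, gaussianReal_apply_eq_integral 0 one_ne_zero,
    ENNReal.toReal_ofReal]
  exact integral_nonneg fun x => gaussianPDFReal_nonneg 0 1 x

lemma hasDerivAt_stdGaussianCDF (t : ℝ) :
    HasDerivAt stdGaussianCDF (stdGaussianPDF t) t := by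
  have hcont : Continuous (gaussianPDFReal 0 1) := by
    unfold gaussianPDFReal
    fun_prop
  have hint := integrable_gaussianPDFReal 0 1
  have key : HasDerivAt (fun u => ∫ x in (0:ℝ)..u, gaussianPDFReal 0 1 x)
      (gaussianPDFReal 0 1 t) t := by
    refine intervalIntegral.integral_hasDerivAt_right
      (hint.intervalIntegrable) ?_ hcont.continuousAt
    exact hcont.stronglyMeasurable.stronglyMeasurableAtFilter
  have heq : ∀ u, stdGaussianCDF u
      = (∫ x in (0:ℝ)..u, gaussianPDFReal 0 1 x) + stdGaussianCDF 0 := by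
    intro u
    rw [stdGaussianCDF_eq, stdGaussianCDF_eq,
      ← intervalIntegral.integral_Iic_sub_Iic hint.integrableOn hint.integrableOn]
    ring
  rw [stdGaussianPDF_eq]
  have := key.add_const (stdGaussianCDF 0)
  exact this.congr_deriv rfl |>.congr_of_eventuallyEq (Filter.Eventually.of_forall heq) |>.congr_deriv rfl

lemma hasDerivAt_stdGaussianPDF (t : ℝ) :
    HasDerivAt stdGaussianPDF (-t * stdGaussianPDF t) t := by
  unfold stdGaussianPDF
  have h : HasDerivAt (fun t : ℝ => -t ^ 2 / 2) (-t) t := by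
    have := ((hasDerivAt_pow 2 t).neg).div_const 2
    simpa using this.congr_deriv (by ring)
  have := (h.exp).const_mul (1 / Real.sqrt (2 * Real.pi))
  exact this.congr_deriv (by ring)

/-- `h(u) = u·Φ(u) + φ(u)` has derivative `Φ(u)`. -/
lemma hasDerivAt_h (u : ℝ) :
    HasDerivAt (fun u => u * stdGaussianCDF u + stdGaussianPDF u)
      (stdGaussianCDF u) u := by
  have h1 := (hasDerivAt_id u).mul (hasDerivAt_stdGaussianCDF u)
  have h2 := hasDerivAt_stdGaussianPDF u
  have := h1.add h2
  exact this.congr_deriv (by simp only [id_eq]; ring)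

lemma monotone_stdGaussianCDF : Monotone stdGaussianCDF := by
  intro a b hab
  unfold stdGaussianCDF
  refine ENNReal.toReal_mono (measure_ne_top _ _) ?_
  exact measure_mono (Set.Iic_subset_Iic.mpr hab)

lemma convexOn_h :
    ConvexOn ℝ Set.univ (fun u => u * stdGaussianCDF u + stdGaussianPDF u) := by
  have hdiff : Differentiable ℝ (fun u => u * stdGaussianCDF u + stdGaussianPDF u) :=
    fun u => (hasDerivAt_h u).differentiableAt
  refine Monotone.convexOn_univ_of_deriv hdiff ?_
  have : deriv (fun u => u * stdGaussianCDF u + stdGaussianPDF u) = stdGaussianCDF := by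
    ext u; exact (hasDerivAt_h u).deriv
  rw [this]
  exact monotone_stdGaussianCDF

/-- Perspective of a convex function is convex. -/
lemma perspective_convexOn {h : ℝ → ℝ} (hh : ConvexOn ℝ Set.univ h) :
    ConvexOn ℝ {p : ℝ × ℝ | 0 < p.2} (fun p : ℝ × ℝ => p.2 * h (p.1 / p.2)) := by
  constructor
  · have hset : {p : ℝ × ℝ | 0 < p.2} = Set.univ ×ˢ Set.Ioi 0 := by
      ext p; simp [Set.mem_prod]
    rw [hset]
    exact convex_univ.prod (convex_Ioi 0)
  · rintro ⟨s1, r1⟩ h1 ⟨s2, r2⟩ h2 a b ha hb hab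
    simp only [Set.mem_setOf_eq] at h1 h2
    simp only [Prod.smul_mk, Prod.mk_add_mk, smul_eq_mul]
    set r := a * r1 + b * r2 with hr
    have hrpos : 0 < r := by
      rcases ha.eq_or_lt with h|h
      · have hb1 : b = 1 := by linarith
        simp only [hr, ← h, hb1, zero_mul, one_mul, zero_add]
        exact h2
      · nlinarith [mul_nonneg hb h2.le, mul_pos h h1]
    have hw1 : 0 ≤ a * r1 / r := by positivity
    have hw2 : 0 ≤ b * r2 / r := by positivity
    have hwsum : a * r1 / r + b * r2 / r = 1 := by
      field_simp
      exact hr.symm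
    have key := hh.2 (Set.mem_univ (s1 / r1)) (Set.mem_univ (s2 / r2)) hw1 hw2 hwsum
    simp only [smul_eq_mul] at key
    have harg : a * r1 / r * (s1 / r1) + b * r2 / r * (s2 / r2)
        = (a * s1 + b * s2) / r := by
      field_simp
    rw [harg] at key
    calc r * h ((a * s1 + b * s2) / r)
        ≤ r * (a * r1 / r * h (s1 / r1) + b * r2 / r * h (s2 / r2)) := by
          exact mul_le_mul_of_nonneg_left key hrpos.le
      _ = a * (r1 * h (s1 / r1)) + b * (r2 * h (s2 / r2)) := by
          field_simp

/-- The function `g(s, r) = s·Φ(s/r) + r·φ(s/r)` is convex on `ℝ × (0, ∞)`. -/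
theorem convexOn_closed_form_expected_hinge :
    ConvexOn ℝ {p : ℝ × ℝ | 0 < p.2}
      (fun p : ℝ × ℝ =>
        p.1 * stdGaussianCDF (p.1 / p.2) + p.2 * stdGaussianPDF (p.1 / p.2)) := by
  refine (perspective_convexOn convexOn_h).congr ?_
  rintro ⟨s, r⟩ hp
  simp only [Set.mem_setOf_eq] at hp
  have hr : r ≠ 0 := hp.ne'
  field_simp
end
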